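/- For the symmetric standard double bubble in ℝ^{m+1} with sheet radius R, the (m+1)-dimensional volume of each enclosed chamber equals V = ω_m R^{m+1} I_{m+1}(2π/3), where I_{m+1}(x) = ∫₀ˣ sin^{m+1}(t) dt and ω_m is the volume of the m-dimensional unit ball. -/

import Mathlib

open MeasureTheory

noncomputable def Ifun (k : ℕ) (x : ℝ) : ℝ := ∫ t in (0:ℝ)..x, Real.sin t ^ k

noncomputable def unitBallVol (m : ℕ) : ℝ :=
  (volume (Metric.ball (0 : EuclideanSpace ℝ (Fin m)) 1)).toReal

lemma slice_integral (m : ℕ) (R : ℝ) (hR : 0 < R) :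
    ∫ t in (0:ℝ)..(3*R/2), Real.sqrt (R^2 - (t - R/2)^2) ^ m
      = R^(m+1) * Ifun (m+1) (2*Real.pi/3) := by
  have hf : Continuous (fun t : ℝ => Real.sqrt (R^2 - (t - R/2)^2) ^ m) := by
    exact (Real.continuous_sqrt.comp (by continuity)).pow m
  have hsub := intervalIntegral.integral_comp_smul_deriv
      (f := fun φ => R/2 - R * Real.cos φ) (f' := fun φ => R * Real.sin φ)
      (a := Real.pi/3) (b := Real.pi)
      (g := fun t => Real.sqrt (R^2 - (t - R/2)^2) ^ m)
      (fun x _ => by simpa using (HasDerivAt.const_sub (R/2) ((Real.hasDerivAt_cos x).const_mul R)))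
      ((continuous_const.mul Real.continuous_sin).continuousOn) hf
  simp only [Function.comp, Real.cos_pi, Real.cos_pi_div_three] at hsub
  have h0 : R / 2 - R * (1/2) = 0 := by ring
  have h1 : R / 2 - R * (-1) = 3*R/2 := by ring
  rw [h0, h1] at hsub
  rw [← hsub]
  -- now the LHS over [π/3, π]: integrand equals R^(m+1) * sin^(m+1)
  have hpi : Real.pi/3 ≤ Real.pi := by
    nlinarith [Real.pi_pos]
  have hcong : ∀ φ ∈ Set.uIcc (Real.pi/3) Real.pi,
      (R * Real.sin φ) • Real.sqrt (R^2 - ((fun φ => R/2 - R * Real.cos φ) φ - R/2)^2) ^ m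
        = R^(m+1) * Real.sin φ ^ (m+1) := by
    intro φ hφ
    rw [Set.uIcc_of_le hpi] at hφ
    have hs : 0 ≤ Real.sin φ := Real.sin_nonneg_of_nonneg_of_le_pi
      (le_trans (by positivity) hφ.1) hφ.2
    have : R ^ 2 - (R/2 - R * Real.cos φ - R/2)^2 = (R * Real.sin φ)^2 := by
      have := Real.sin_sq_add_cos_sq φ
      nlinarith
    rw [this, Real.sqrt_sq (by positivity)]
    simp [smul_eq_mul, mul_pow, pow_succ]
    ring
  rw [intervalIntegral.integral_congr hcong]
  rw [intervalIntegral.integral_const_mul]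
  -- ∫_{π/3}^{π} sin^{m+1} = ∫_0^{2π/3} sin^{m+1}
  have hrefl : ∫ φ in (Real.pi/3)..Real.pi, Real.sin φ ^ (m+1)
      = ∫ φ in (0:ℝ)..(2*Real.pi/3), Real.sin φ ^ (m+1) := by
    have := intervalIntegral.integral_comp_sub_left (a := Real.pi/3) (b := Real.pi)
      (fun x => Real.sin x ^ (m+1)) Real.pi
    rw [sub_self] at this
    have h23 : Real.pi - Real.pi/3 = 2*Real.pi/3 := by ring
    rw [h23] at this
    rw [← this]
    apply intervalIntegral.integral_congr
    intro x _
    simp [Real.sin_pi_sub]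
  rw [hrefl, Ifun]

set_option maxHeartbeats 1000000 in
/-- the volume of each chamber of the symmetric standard double
bubble in `ℝ^{m+1}` with sheet radius `R` equals `ω_m R^{m+1} I_{m+1}(2π/3)`.
The chamber is the region bounded by the spherical cap of radius `R` centered
at `(R/2)e_{m+1}` (opening angle `2π/3`) and by the flat disk in the
hyperplane `{x_{m+1} = 0}` through the cap's boundary circle. -/
theorem stmt_12 (m : ℕ) (R : ℝ) (hR : 0 < R) :
    (volume {x : EuclideanSpace ℝ (Fin (m+1)) |
        ‖x - (R/2) • EuclideanSpace.single (Fin.last m) (1:ℝ)‖ ≤ R ∧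
        0 ≤ x (Fin.last m)}).toReal =
      unitBallVol m * R ^ (m+1) * Ifun (m+1) (2 * Real.pi / 3) := by
  have key : (volume {x : EuclideanSpace ℝ (Fin (m+1)) |
        ‖x - (R/2) • EuclideanSpace.single (Fin.last m) (1:ℝ)‖ ≤ R ∧
        0 ≤ x (Fin.last m)}).toReal =
      unitBallVol m * (∫ t in (0:ℝ)..(3*R/2), Real.sqrt (R^2 - (t - R/2)^2) ^ m) := by
    set B := volume (Metric.ball (0 : EuclideanSpace ℝ (Fin m)) 1) with hB
    set T : Set (ℝ × EuclideanSpace ℝ (Fin m)) :=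
      {p | 0 ≤ p.1 ∧ (p.1 - R/2)^2 + ‖p.2‖^2 ≤ R^2} with hT
    have hTclosed : IsClosed T := by
      rw [hT, Set.setOf_and]
      exact (isClosed_le continuous_const continuous_fst).inter
        (isClosed_le (((continuous_fst.sub continuous_const).pow 2).add
          ((continuous_snd.norm).pow 2)) continuous_const)
    -- the measure-preserving map
    let g : EuclideanSpace ℝ (Fin (m+1)) → ℝ × EuclideanSpace ℝ (Fin m) :=
      fun x => (x (Fin.last m),
        ((MeasurableEquiv.toLp 2 (Fin m → ℝ)).symm).symm (fun j => x j.castSucc))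
    have hg : MeasurePreserving g volume (volume.prod volume) := by
      have e1 := EuclideanSpace.volume_preserving_symm_measurableEquiv_toLp (Fin (m+1))
      have e2 := volume_preserving_piFinSuccAbove (fun _ : Fin (m+1) => ℝ) (Fin.last m)
      have e3 := (MeasurePreserving.id (volume : Measure ℝ)).prod
        (EuclideanSpace.volume_preserving_symm_measurableEquiv_toLp (Fin m)).symm
      have hcomp := e3.comp (e2.comp e1)
      have hfun : (Prod.map id ⇑((MeasurableEquiv.toLp 2 (Fin m → ℝ)).symm).symm ∘
          ⇑(MeasurableEquiv.piFinSuccAbove (fun _ : Fin (m+1) => ℝ) (Fin.last m)) ∘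
          ⇑((MeasurableEquiv.toLp 2 (Fin (m+1) → ℝ)).symm)) = g := by
        funext x
        simp only [g, Function.comp, MeasurableEquiv.piFinSuccAbove,
          MeasurableEquiv.symm_symm, MeasurableEquiv.toLp_apply, Prod.map, Fin.removeNth,
          Fin.insertNthEquiv, MeasurableEquiv.coe_mk, Equiv.coe_fn_symm_mk, id,
          Fin.succAbove_last, Fin.removeNth_last]
        rfl
      exact hfun ▸ hcomp
    have hST : {x : EuclideanSpace ℝ (Fin (m+1)) |
          ‖x - (R/2) • EuclideanSpace.single (Fin.last m) (1:ℝ)‖ ≤ R ∧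
          0 ≤ x (Fin.last m)} = g ⁻¹' T := by
      ext x
      simp only [Set.mem_setOf_eq, Set.mem_preimage, hT, g]
      have hnorm : ‖x - (R/2) • EuclideanSpace.single (Fin.last m) (1:ℝ)‖^2
          = (x (Fin.last m) - R/2)^2 + ∑ j : Fin m, (x j.castSucc)^2 := by
        rw [EuclideanSpace.norm_eq, Real.sq_sqrt (by positivity)]
        rw [Fin.sum_univ_castSucc]
        have h1 : ∀ j : Fin m, (x - (R/2) • EuclideanSpace.single (Fin.last m) (1:ℝ)) j.castSucc
            = x j.castSucc := by
          intro j
          have : (j.castSucc : Fin (m+1)) ≠ Fin.last m := (Fin.castSucc_lt_last j).ne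
          simp [EuclideanSpace.single_apply, this]
        have h2 : (x - (R/2) • EuclideanSpace.single (Fin.last m) (1:ℝ)) (Fin.last m)
            = x (Fin.last m) - R/2 := by
          simp [EuclideanSpace.single_apply]
        rw [h2]
        rw [Finset.sum_congr rfl (fun j _ => by rw [h1 j])]
        simp only [Real.norm_eq_abs, sq_abs]
        ring
      have hnorm2 : ‖((MeasurableEquiv.toLp 2 (Fin m → ℝ)).symm).symm
            (fun j => x j.castSucc)‖^2 = ∑ j : Fin m, (x j.castSucc)^2 := by
        rw [EuclideanSpace.norm_eq, Real.sq_sqrt (by positivity)]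
        simp only [MeasurableEquiv.symm_symm, MeasurableEquiv.toLp_apply, MeasurableEquiv.symm_mk,
          MeasurableEquiv.coe_mk, PiLp.toLp_apply, Real.norm_eq_abs, sq_abs]
      constructor
      · rintro ⟨h1, h2⟩
        refine ⟨h2, ?_⟩
        rw [hnorm2]
        have := pow_le_pow_left₀ (norm_nonneg _) h1 2
        rw [hnorm] at this
        linarith
      · rintro ⟨h1, h2⟩
        rw [hnorm2] at h2
        refine ⟨?_, h1⟩
        have hx2 : ‖x - (R/2) • EuclideanSpace.single (Fin.last m) (1:ℝ)‖^2 ≤ R^2 := by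
          rw [hnorm]; linarith
        nlinarith [norm_nonneg (x - (R/2) • EuclideanSpace.single (Fin.last m) (1:ℝ))]
    rw [hST, hg.measure_preimage hTclosed.measurableSet.nullMeasurableSet]
    rw [Measure.prod_apply hTclosed.measurableSet]
    -- sections
    have hsec : ∀ t : ℝ, volume (Prod.mk t ⁻¹' T)
        = Set.indicator (Set.Icc 0 (3*R/2))
          (fun t => ENNReal.ofReal (Real.sqrt (R^2 - (t - R/2)^2) ^ m) * B) t := by
      intro t
      by_cases ht : t ∈ Set.Icc 0 (3*R/2)
      · rw [Set.indicator_of_mem ht]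
        obtain ⟨ht0, ht1⟩ := ht
        have hsq : (0:ℝ) ≤ R^2 - (t - R/2)^2 := by nlinarith
        have hsecset : Prod.mk t ⁻¹' T
            = Metric.closedBall (0 : EuclideanSpace ℝ (Fin m))
                (Real.sqrt (R^2 - (t - R/2)^2)) := by
          ext y
          simp only [Set.mem_preimage, hT, Set.mem_setOf_eq, Metric.mem_closedBall,
            dist_zero_right]
          rw [Real.le_sqrt (norm_nonneg y) hsq]
          constructor
          · rintro ⟨-, h⟩; linarith
          · intro h; exact ⟨ht0, by linarith⟩
        rw [hsecset, Measure.addHaar_closedBall _ _ (Real.sqrt_nonneg _)]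
        simp [finrank_euclideanSpace_fin, hB]
      · rw [Set.indicator_of_notMem ht]
        have : Prod.mk t ⁻¹' T = ∅ := by
          ext y
          simp only [Set.mem_preimage, hT, Set.mem_setOf_eq, Set.mem_empty_iff_false,
            iff_false, not_and]
          intro ht0
          simp only [Set.mem_Icc, not_and, not_le] at ht
          have := ht ht0
          nlinarith [sq_nonneg ‖y‖, norm_nonneg y]
        rw [this, measure_empty]
    rw [lintegral_congr hsec]
    rw [lintegral_indicator measurableSet_Icc]
    have hmeas : Measurable fun t : ℝ => ENNReal.ofReal (Real.sqrt (R^2 - (t - R/2)^2) ^ m) := by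
      apply ENNReal.measurable_ofReal.comp
      exact ((Real.continuous_sqrt.comp (continuous_const.sub ((continuous_id.sub continuous_const).pow 2))).pow m).measurable
    rw [lintegral_mul_const _ hmeas]
    have hcont : Continuous (fun t : ℝ => Real.sqrt (R^2 - (t - R/2)^2) ^ m) :=
      (Real.continuous_sqrt.comp (continuous_const.sub ((continuous_id.sub continuous_const).pow 2))).pow m
    have hint : IntegrableOn (fun t : ℝ => Real.sqrt (R^2 - (t - R/2)^2) ^ m)
        (Set.Icc 0 (3*R/2)) volume := hcont.integrableOn_Icc
    rw [← ofReal_integral_eq_lintegral_ofReal hint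
      (Filter.Eventually.of_forall fun t => by positivity)]
    have hIeq : ∫ t in Set.Icc 0 (3*R/2), Real.sqrt (R^2 - (t - R/2)^2) ^ m
        = ∫ t in (0:ℝ)..(3*R/2), Real.sqrt (R^2 - (t - R/2)^2) ^ m := by
      rw [intervalIntegral.integral_of_le (by linarith), integral_Icc_eq_integral_Ioc]
    rw [hIeq]
    have hInn : 0 ≤ ∫ t in (0:ℝ)..(3*R/2), Real.sqrt (R^2 - (t - R/2)^2) ^ m :=
      intervalIntegral.integral_nonneg (by linarith) (fun t _ => by positivity)
    rw [ENNReal.toReal_mul, ENNReal.toReal_ofReal hInn]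
    rw [unitBallVol, ← hB]
    ring

  rw [key, slice_integral m R hR]
  ring
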